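/- There exist constants c', C', p' > 0, depending only on c, C, p, such that for every t ≥ 0 and every L ≥ 0, ℙ(max(t − τ_{N(t)}, M_{N(t)+1}) > L) ≤ C' e^{−c' L^{p'}}; here M_{N(t)+1} is the mark attached to the renewal interval [τ_{N(t)}, τ_{N(t)+1}) containing t. -/

import Mathlib

open MeasureTheory ProbabilityTheory Set Filter

set_option maxHeartbeats 1000000 in
lemma renewal_key_bound (c p : ℝ) (hc : 0 < c) (hp : 0 < p) :
    ∃ K : ℝ, 0 < K ∧ ∀ L x : ℝ, 0 ≤ L → L ≤ x →
      (x + 1) ^ 2 * Real.exp (-c * x ^ p) ≤ K * Real.exp (-(c / 2) * L ^ min p 1) := by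
  set n : ℕ := ⌈2 / p⌉₊ with hn
  set A : ℝ := 4 * (n.factorial : ℝ) * (2 / c) ^ n with hA
  have hA0 : 0 < A := by positivity
  refine ⟨A + 4 * Real.exp (c / 2), by positivity, ?_⟩
  intro L x hL hLx
  have hx : 0 ≤ x := hL.trans hLx
  have hp' : 0 < min p 1 := lt_min hp one_pos
  have hxp0 : 0 ≤ x ^ p := Real.rpow_nonneg hx p
  have hexp0 : (0:ℝ) < Real.exp (-(c / 2) * L ^ min p 1) := Real.exp_pos _
  by_cases hx1 : x ≤ 1
  · have h1 : (x + 1) ^ 2 ≤ 4 := by nlinarith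
    have h2 : Real.exp (-c * x ^ p) ≤ 1 := by
      rw [Real.exp_le_one_iff]
      nlinarith
    have hL1 : L ^ min p 1 ≤ 1 := Real.rpow_le_one hL (hLx.trans hx1) hp'.le
    have h3 : (1 : ℝ) ≤ Real.exp (c / 2) * Real.exp (-(c / 2) * L ^ min p 1) := by
      rw [← Real.exp_add]
      have : (0:ℝ) ≤ c / 2 + -(c / 2) * L ^ min p 1 := by nlinarith
      calc (1:ℝ) = Real.exp 0 := Real.exp_zero.symm
        _ ≤ _ := Real.exp_le_exp.mpr this
    calc (x + 1) ^ 2 * Real.exp (-c * x ^ p) ≤ 4 * 1 := by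
          apply mul_le_mul h1 h2 (Real.exp_pos _).le (by norm_num)
      _ = 4 := by norm_num
      _ ≤ 4 * (Real.exp (c / 2) * Real.exp (-(c / 2) * L ^ min p 1)) := by nlinarith
      _ ≤ (A + 4 * Real.exp (c / 2)) * Real.exp (-(c / 2) * L ^ min p 1) := by
          nlinarith [mul_pos hA0 hexp0]
  · push_neg at hx1
    have hxx : L ^ min p 1 ≤ x ^ p := by
      calc L ^ min p 1 ≤ x ^ min p 1 := Real.rpow_le_rpow hL hLx hp'.le
        _ ≤ x ^ p := Real.rpow_le_rpow_of_exponent_le hx1.le (min_le_left _ _)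
    set y : ℝ := c / 2 * x ^ p with hy
    have hy0 : 0 ≤ y := by positivity
    have hnp : (2 : ℝ) ≤ (n : ℝ) * p := by
      have := Nat.le_ceil (2 / p)
      rw [← hn] at this
      calc (2 : ℝ) = 2 / p * p := by field_simp
        _ ≤ (n : ℝ) * p := by nlinarith
    have hstep : (x + 1) ^ 2 ≤ A * Real.exp y := by
      have e1 : (x + 1) ^ 2 ≤ 4 * x ^ (2 : ℝ) := by
        rw [Real.rpow_two]
        nlinarith
      have e2 : x ^ (2 : ℝ) ≤ x ^ ((n : ℝ) * p) :=
        Real.rpow_le_rpow_of_exponent_le hx1.le hnp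
      have e3 : x ^ ((n : ℝ) * p) = (x ^ p) ^ n := by
        rw [mul_comm, Real.rpow_mul hx, Real.rpow_natCast]
      have e4 : (x ^ p) ^ n = (2 / c) ^ n * y ^ n := by
        rw [hy, ← mul_pow]
        congr 1
        field_simp
      have e5 : y ^ n ≤ (n.factorial : ℝ) * Real.exp y := by
        have h5 := Real.pow_div_factorial_le_exp (x := y) hy0 n
        have hf : (0:ℝ) < n.factorial := by positivity
        calc y ^ n = y ^ n / n.factorial * n.factorial := by field_simp
          _ ≤ Real.exp y * n.factorial := by nlinarith
          _ = (n.factorial : ℝ) * Real.exp y := by ring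
      calc (x + 1) ^ 2 ≤ 4 * x ^ (2:ℝ) := e1
        _ ≤ 4 * x ^ ((n:ℝ) * p) := by nlinarith
        _ = 4 * ((2 / c) ^ n * y ^ n) := by rw [e3, e4]
        _ ≤ 4 * ((2 / c) ^ n * ((n.factorial : ℝ) * Real.exp y)) := by
            have h2c : (0:ℝ) < (2/c) ^ n := by positivity
            nlinarith
        _ = A * Real.exp y := by rw [hA]; ring
    have hEq : Real.exp y * Real.exp (-c * x ^ p) = Real.exp (-(c/2) * x ^ p) := by
      rw [← Real.exp_add]; congr 1; rw [hy]; ring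
    have hmono : Real.exp (-(c/2) * x ^ p) ≤ Real.exp (-(c/2) * L ^ min p 1) := by
      apply Real.exp_le_exp.mpr
      nlinarith
    calc (x + 1) ^ 2 * Real.exp (-c * x ^ p) ≤ A * Real.exp y * Real.exp (-c * x ^ p) :=
          mul_le_mul_of_nonneg_right hstep (Real.exp_pos _).le
      _ = A * Real.exp (-(c/2) * x ^ p) := by rw [mul_assoc, hEq]
      _ ≤ A * Real.exp (-(c/2) * L ^ min p 1) :=
          mul_le_mul_of_nonneg_left hmono hA0.le
      _ ≤ (A + 4 * Real.exp (c / 2)) * Real.exp (-(c / 2) * L ^ min p 1) := by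
          nlinarith [Real.exp_pos (c/2)]

lemma renewal_count_bound {Ω : Type*} {mΩ : MeasurableSpace Ω}
    (μ : Measure Ω) [IsProbabilityMeasure μ]
    (τ : ℕ → Ω → ℝ) (hτm : ∀ k, Measurable (τ k)) (a b : ℝ) (hab : a ≤ b)
    (hgap : ∀ᵐ ω ∂μ, ∀ k d : ℕ, τ k ω + d ≤ τ (k + d) ω) :
    ∑' k, μ (τ k ⁻¹' Set.Icc a b) ≤ ENNReal.ofReal (b - a + 1) := by
  set B : ℕ → Set Ω := fun k => τ k ⁻¹' Set.Icc a b with hB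
  have hmeas : ∀ k, MeasurableSet (B k) := fun k => (hτm k) measurableSet_Icc
  have h1 : ∀ k, μ (B k) = ∫⁻ ω, (B k).indicator (1 : Ω → ENNReal) ω ∂μ := by
    intro k
    rw [lintegral_indicator_one (hmeas k)]
  calc ∑' k, μ (B k) = ∑' k, ∫⁻ ω, (B k).indicator (1 : Ω → ENNReal) ω ∂μ := by
        simp_rw [h1]
    _ = ∫⁻ ω, ∑' k, (B k).indicator (1 : Ω → ENNReal) ω ∂μ := by
        exact (lintegral_tsum (fun k => ((measurable_const.indicator (hmeas k)).aemeasurable))).symm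
    _ ≤ ∫⁻ _ω, ENNReal.ofReal (b - a + 1) ∂μ := by
        apply lintegral_mono_ae
        filter_upwards [hgap] with ω hω
        by_cases hne : ∃ k, ω ∈ B k
        · obtain ⟨k₁, hk₁⟩ := hne
          set S : Set ℕ := {k | ω ∈ B k} with hS
          have hSne : S.Nonempty := ⟨k₁, hk₁⟩
          set k₀ : ℕ := sInf S with hk₀
          have hk₀S : k₀ ∈ S := Nat.sInf_mem hSne
          set m : ℕ := ⌊b - a⌋₊ with hm
          have hsub : ∀ k, ω ∈ B k → k ∈ Finset.Icc k₀ (k₀ + m) := by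
            intro k hk
            have hle : k₀ ≤ k := Nat.sInf_le hk
            have hd := hω k₀ (k - k₀)
            rw [Nat.add_sub_cancel' hle] at hd
            have h1 : τ k₀ ω ∈ Set.Icc a b := hk₀S
            have h2 : τ k ω ∈ Set.Icc a b := hk
            have : ((k - k₀ : ℕ) : ℝ) ≤ b - a := by
              have := h1.1; have := h2.2; linarith
            have : k - k₀ ≤ m := Nat.le_floor this
            simp only [Finset.mem_Icc]
            omega
          have hle : ∀ k, (B k).indicator (1 : Ω → ENNReal) ω ≤
              (↑(Finset.Icc k₀ (k₀ + m)) : Set ℕ).indicator (1 : ℕ → ENNReal) k := by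
            intro k
            by_cases hk : ω ∈ B k
            · rw [Set.indicator_of_mem hk, Set.indicator_of_mem (Finset.mem_coe.mpr (hsub k hk))]
              exact le_rfl
            · rw [Set.indicator_of_notMem hk]
              exact zero_le
          calc ∑' k, (B k).indicator (1 : Ω → ENNReal) ω
              ≤ ∑' k, (↑(Finset.Icc k₀ (k₀ + m)) : Set ℕ).indicator (1 : ℕ → ENNReal) k :=
                ENNReal.tsum_le_tsum hle
            _ = ∑ k ∈ Finset.Icc k₀ (k₀ + m), (1:ENNReal) := by
                rw [tsum_eq_sum (s := Finset.Icc k₀ (k₀ + m))]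
                · apply Finset.sum_congr rfl
                  intro k hk
                  rw [Set.indicator_of_mem (Finset.mem_coe.mpr hk)]
                  rfl
                · intro k hk
                  exact Set.indicator_of_notMem (by exact_mod_cast hk) _
            _ = ((m + 1 : ℕ) : ENNReal) := by
                have hcard : k₀ + m + 1 - k₀ = m + 1 := by omega
                rw [Finset.sum_const, Nat.card_Icc, hcard]
                simp
            _ ≤ ENNReal.ofReal (b - a + 1) := by
                rw [← ENNReal.ofReal_natCast (m + 1)]
                apply ENNReal.ofReal_le_ofReal
                push_cast
                have : (m : ℝ) ≤ b - a := Nat.floor_le (by linarith)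
                linarith
        · push_neg at hne
          have : ∀ k, (B k).indicator (1 : Ω → ENNReal) ω = 0 := fun k =>
            Set.indicator_of_notMem (hne k) _
          simp only [this, tsum_zero]
          exact zero_le
    _ = ENNReal.ofReal (b - a + 1) := by
        rw [lintegral_const, measure_univ, mul_one]

/-- **Marked renewal process.** Let `((U k, M k))_{k ≥ 1}` be i.i.d. with `U k ≥ 1` and
`M k ≥ 0` a.s., and with `ℙ(max (U 1) (M 1) > L) ≤ C e^{−c L^p}`. With `τ k := U 1 + ⋯ + U k`
and `N t := max {k | τ k ≤ t}`, there exist `c', C', p' > 0` such that for every `t ≥ 0`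
and `L ≥ 0`, `ℙ(max (t − τ (N t)) (M (N t + 1)) > L) ≤ C' e^{−c' L^{p'}}`. -/
theorem marked_renewal_overshoot_tail
    {Ω : Type*} {mΩ : MeasurableSpace Ω}
    (μ : Measure Ω) [IsProbabilityMeasure μ]
    (U M : ℕ → Ω → ℝ)
    (hU_meas : ∀ k : ℕ, Measurable (U k)) (hM_meas : ∀ k : ℕ, Measurable (M k))
    (hU_one : ∀ k : ℕ, 1 ≤ k → ∀ᵐ ω ∂μ, 1 ≤ U k ω)
    (hM_nonneg : ∀ k : ℕ, 1 ≤ k → ∀ᵐ ω ∂μ, 0 ≤ M k ω)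
    (h_indep : iIndepFun
      (fun (k : ℕ) (ω : Ω) => (U (k + 1) ω, M (k + 1) ω)) μ)
    (h_ident : ∀ k : ℕ, IdentDistrib
      (fun ω => (U (k + 1) ω, M (k + 1) ω)) (fun ω => (U 1 ω, M 1 ω)) μ μ)
    (c C p : ℝ) (hc : 0 < c) (hC : 0 < C) (hp : 0 < p)
    (h_tail : ∀ L : ℝ, 0 ≤ L →
      μ {ω | L < max (U 1 ω) (M 1 ω)} ≤ ENNReal.ofReal (C * Real.exp (-c * L ^ p)))
    (τ : ℕ → Ω → ℝ)
    (hτ : ∀ (k : ℕ) (ω : Ω), τ k ω = ∑ i ∈ Finset.range k, U (i + 1) ω)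
    (N : ℝ → Ω → ℕ)
    (hN : ∀ (t : ℝ) (ω : Ω), N t ω = sSup {k : ℕ | τ k ω ≤ t}) :
    ∃ c' C' p' : ℝ, 0 < c' ∧ 0 < C' ∧ 0 < p' ∧
      ∀ t : ℝ, 0 ≤ t → ∀ L : ℝ, 0 ≤ L →
        μ {ω | L < max (t - τ (N t ω) ω) (M (N t ω + 1) ω)}
          ≤ ENNReal.ofReal (C' * Real.exp (-c' * L ^ p')) := by
  obtain ⟨K, hK, hkey⟩ := renewal_key_bound c p hc hp
  refine ⟨c / 2, 6 * C * K, min p 1, by positivity, by positivity, lt_min hp one_pos, ?_⟩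
  intro t ht L hL
  set f : ℕ → Ω → ℝ × ℝ := fun k ω => (U (k + 1) ω, M (k + 1) ω) with hf
  have hfmeas : ∀ i, Measurable (f i) := fun i => ((hU_meas (i+1)).prodMk (hM_meas (i+1)))
  have hτmeas : ∀ k, Measurable (τ k) := by
    intro k
    have h : τ k = fun ω => ∑ i ∈ Finset.range k, U (i+1) ω := funext (hτ k)
    rw [h]
    exact Finset.measurable_sum _ (fun i _ => hU_meas (i+1))
  have hGae : ∀ᵐ ω ∂μ, ∀ k : ℕ, 1 ≤ U (k+1) ω := by
    rw [ae_all_iff]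
    exact fun k => hU_one (k+1) (by omega)
  have hgap : ∀ᵐ ω ∂μ, ∀ k d : ℕ, τ k ω + d ≤ τ (k+d) ω := by
    filter_upwards [hGae] with ω hω
    intro k d
    induction d with
    | zero => simp
    | succ d ih =>
      have hstep : τ (k+(d+1)) ω = τ (k+d) ω + U (k+d+1) ω := by
        rw [show k+(d+1) = (k+d)+1 from rfl, hτ, hτ, Finset.sum_range_succ]
      have h1 := hω (k+d)
      rw [hstep]
      push_cast at ih ⊢
      linarith
  -- the events
  set x : ℕ → ℝ := fun j => max ((2:ℝ)^j - 1) L with hx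
  have hx0 : ∀ j, 0 ≤ x j := fun j => le_trans hL (le_max_right _ _)
  set T : ℕ → Set (ℝ × ℝ) := fun j => {q | (2:ℝ)^j ≤ q.1 ∧ L < max q.1 q.2} with hT
  have hTmeas : ∀ j, MeasurableSet (T j) := fun j =>
    (measurableSet_le measurable_const measurable_fst).inter
      (measurableSet_lt measurable_const (measurable_fst.max measurable_snd))
  set A : ℕ → ℕ → Set Ω := fun j k => τ k ⁻¹' Set.Icc (t - 2^(j+1)) t ∩ f k ⁻¹' T j with hA
  -- good set
  set G : Set Ω := {ω | (∀ k : ℕ, 1 ≤ U (k+1) ω) ∧ ∀ k d : ℕ, τ k ω + d ≤ τ (k+d) ω} with hG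
  have hGc : μ Gᶜ = 0 := by
    have hae := hGae.and hgap
    rw [hG, Set.compl_setOf]
    exact ae_iff.mp hae
  -- inclusion
  have hincl : {ω | L < max (t - τ (N t ω) ω) (M (N t ω + 1) ω)} ⊆ (⋃ j, ⋃ k, A j k) ∪ Gᶜ := by
    intro ω hE
    simp only [Set.mem_setOf_eq] at hE
    by_cases hωG : ω ∈ G
    · left
      obtain ⟨hω, hgapω⟩ := hωG
      have hτ0 : τ 0 ω = 0 := by rw [hτ]; simp
      have hτk : ∀ k : ℕ, (k:ℝ) ≤ τ k ω := by
        intro k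
        have := hgapω 0 k
        rw [zero_add] at this
        rw [hτ0] at this  -- careful
        linarith
      have h0S : (0:ℕ) ∈ {k : ℕ | τ k ω ≤ t} := by
        simp only [Set.mem_setOf_eq, hτ0]; exact ht
      have hbdd : BddAbove {k : ℕ | τ k ω ≤ t} := by
        refine ⟨⌊t⌋₊, fun k hk => Nat.le_floor ?_⟩
        exact le_trans (hτk k) hk
      have hns : N t ω = sSup {k : ℕ | τ k ω ≤ t} := hN t ω
      have hnS : τ (N t ω) ω ≤ t := by
        rw [hns]
        exact Nat.sSup_mem ⟨0, h0S⟩ hbdd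
      have hn2 : t < τ (N t ω + 1) ω := by
        by_contra h
        push_neg at h
        have hmem : N t ω + 1 ∈ {k : ℕ | τ k ω ≤ t} := h
        have := le_csSup hbdd hmem
        rw [← hns] at this
        omega
      have hstep : τ (N t ω + 1) ω = τ (N t ω) ω + U (N t ω + 1) ω := by
        rw [hτ, hτ, Finset.sum_range_succ]
      have hUgt : t - τ (N t ω) ω < U (N t ω + 1) ω := by linarith
      have hU1' : 1 ≤ U (N t ω + 1) ω := hω (N t ω)
      obtain ⟨j, hj1, hj2⟩ := exists_nat_pow_near hU1' one_lt_two
      refine Set.mem_iUnion.mpr ⟨j, Set.mem_iUnion.mpr ⟨N t ω, ⟨?_, ?_⟩⟩⟩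
      · constructor
        · linarith
        · exact hnS
      · refine ⟨hj1, ?_⟩
        rcases lt_max_iff.mp hE with h | h
        · exact lt_max_iff.mpr (Or.inl (by linarith))
        · exact lt_max_iff.mpr (Or.inr h)
    · right; exact hωG
  -- independence
  have hindep : ∀ k, IndepFun (τ k) (f k) μ := by
    intro k
    have h1 : IndepFun (∑ j ∈ Finset.range k, f j) (f k) μ :=
      h_indep.indepFun_sum_range_succ hfmeas k
    have h2 := h1.comp (φ := Prod.fst) (ψ := id) measurable_fst measurable_id
    have h3 : Prod.fst ∘ (∑ j ∈ Finset.range k, f j) = τ k := by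
      funext ω
      simp only [Function.comp_apply, Finset.sum_apply, hτ]
      rw [Prod.fst_sum]
    rwa [h3] at h2
  -- mark tail bound
  have hq : ∀ j k : ℕ, μ (f k ⁻¹' T j) ≤ ENNReal.ofReal (C * Real.exp (-c * x j ^ p)) := by
    intro j k
    have h1 : μ (f k ⁻¹' T j) = μ ((fun ω => (U 1 ω, M 1 ω)) ⁻¹' T j) :=
      (h_ident k).measure_mem_eq (hTmeas j)
    rw [h1]
    refine le_trans (measure_mono ?_) (h_tail (x j) (hx0 j))
    intro ω hωT
    obtain ⟨h1', h2'⟩ := hωT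
    have hmax1 : (2:ℝ)^j - 1 < max (U 1 ω) (M 1 ω) :=
      lt_of_lt_of_le (by linarith) (le_trans h1' (le_max_left _ _))
    exact max_lt hmax1 h2'
  have hAbound : ∀ j k : ℕ, μ (A j k) ≤
      μ (τ k ⁻¹' Set.Icc (t - 2^(j+1)) t) * ENNReal.ofReal (C * Real.exp (-c * x j ^ p)) := by
    intro j k
    have hmul := (hindep k).measure_inter_preimage_eq_mul
      (Set.Icc (t - 2^(j+1)) t) (T j) measurableSet_Icc (hTmeas j)
    rw [hA]
    simp only []
    rw [hmul]
    exact mul_le_mul_right (hq j k) _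
  have hsumk : ∀ j : ℕ, ∑' k, μ (A j k) ≤
      ENNReal.ofReal ((2:ℝ)^(j+1) + 1) * ENNReal.ofReal (C * Real.exp (-c * x j ^ p)) := by
    intro j
    have hcount := renewal_count_bound μ τ hτmeas (t - 2^(j+1)) t
      (by nlinarith [pow_pos (by norm_num : (0:ℝ) < 2) (j+1)]) hgap
    have heq : t - (t - (2:ℝ)^(j+1)) + 1 = 2^(j+1) + 1 := by ring
    calc ∑' k, μ (A j k)
        ≤ ∑' k, μ (τ k ⁻¹' Set.Icc (t - 2^(j+1)) t) * ENNReal.ofReal (C * Real.exp (-c * x j ^ p)) :=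
          ENNReal.tsum_le_tsum (hAbound j)
      _ = (∑' k, μ (τ k ⁻¹' Set.Icc (t - 2^(j+1)) t)) * ENNReal.ofReal (C * Real.exp (-c * x j ^ p)) :=
          ENNReal.tsum_mul_right
      _ ≤ ENNReal.ofReal ((2:ℝ)^(j+1) + 1) * ENNReal.ofReal (C * Real.exp (-c * x j ^ p)) := by
          apply mul_le_mul_left
          rw [← heq]
          exact hcount
  -- termwise real bound
  have hterm : ∀ j : ℕ, ((2:ℝ)^(j+1) + 1) * (C * Real.exp (-c * x j ^ p)) ≤
      (3 * C * K * Real.exp (-(c/2) * L ^ min p 1)) * (1/2)^j := by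
    intro j
    have h2j : (1:ℝ) ≤ 2^j := one_le_pow₀ (by norm_num)
    have hxj : (2:ℝ)^j ≤ x j + 1 := by
      have := le_max_left ((2:ℝ)^j - 1) L
      rw [hx]
      simp only []
      linarith
    have hkey' := hkey L (x j) hL (le_max_right _ _)
    have h4 : (2:ℝ)^j * (2:ℝ)^j * Real.exp (-c * x j ^ p) ≤
        K * Real.exp (-(c/2) * L ^ min p 1) := by
      have hsq : (2:ℝ)^j * (2:ℝ)^j ≤ (x j + 1)^2 := by nlinarith
      nlinarith [Real.exp_pos (-c * x j ^ p)]
    have hpowpos : (0:ℝ) < 2^j := pow_pos (by norm_num) j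
    have hhalf : ((1:ℝ)/2)^j = 1/2^j := by rw [div_pow, one_pow]
    rw [hhalf, mul_one_div, le_div_iff₀ hpowpos]
    have h2j1 : ((2:ℝ)^(j+1) + 1) * 2^j ≤ 3 * (2^j * 2^j) := by
      rw [pow_succ]
      nlinarith
    calc ((2:ℝ)^(j+1) + 1) * (C * Real.exp (-c * x j ^ p)) * 2^j
        = ((2^(j+1) + 1) * 2^j) * (C * Real.exp (-c * x j ^ p)) := by ring
      _ ≤ (3 * (2^j * 2^j)) * (C * Real.exp (-c * x j ^ p)) := by
          apply mul_le_mul_of_nonneg_right h2j1 (by positivity)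
      _ = (3 * C) * (2^j * 2^j * Real.exp (-c * x j ^ p)) := by ring
      _ ≤ (3 * C) * (K * Real.exp (-(c/2) * L ^ min p 1)) := by
          apply mul_le_mul_of_nonneg_left h4 (by positivity)
      _ = 3 * C * K * Real.exp (-(c/2) * L ^ min p 1) := by ring
  -- putting it together
  have hE0 : ∀ j, 0 ≤ C * Real.exp (-c * x j ^ p) := fun j => by positivity
  calc μ {ω | L < max (t - τ (N t ω) ω) (M (N t ω + 1) ω)}
      ≤ μ ((⋃ j, ⋃ k, A j k) ∪ Gᶜ) := measure_mono hincl
    _ ≤ μ (⋃ j, ⋃ k, A j k) + μ Gᶜ := measure_union_le _ _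
    _ = μ (⋃ j, ⋃ k, A j k) := by rw [hGc, add_zero]
    _ ≤ ∑' j, μ (⋃ k, A j k) := measure_iUnion_le _
    _ ≤ ∑' j, ∑' k, μ (A j k) := ENNReal.tsum_le_tsum (fun j => measure_iUnion_le _)
    _ ≤ ∑' j, ENNReal.ofReal ((2:ℝ)^(j+1) + 1) * ENNReal.ofReal (C * Real.exp (-c * x j ^ p)) :=
        ENNReal.tsum_le_tsum hsumk
    _ ≤ ∑' j, ENNReal.ofReal ((3 * C * K * Real.exp (-(c/2) * L ^ min p 1)) * (1/2)^j) := by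
        apply ENNReal.tsum_le_tsum
        intro j
        rw [← ENNReal.ofReal_mul (by positivity)]
        exact ENNReal.ofReal_le_ofReal (hterm j)
    _ = ∑' j : ℕ, ENNReal.ofReal (3 * C * K * Real.exp (-(c/2) * L ^ min p 1)) *
          (ENNReal.ofReal (1/2))^j := by
        congr 1
        funext j
        rw [ENNReal.ofReal_mul (by positivity), ENNReal.ofReal_pow (by norm_num)]
    _ = ENNReal.ofReal (3 * C * K * Real.exp (-(c/2) * L ^ min p 1)) *
          (1 - ENNReal.ofReal (1/2))⁻¹ := by
        rw [ENNReal.tsum_mul_left, ENNReal.tsum_geometric]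
    _ ≤ ENNReal.ofReal (6 * C * K * Real.exp (-(c/2) * L ^ min p 1)) := by
        have hhalf : ENNReal.ofReal (1/2) = 1/2 := by
          rw [ENNReal.ofReal_div_of_pos (by norm_num)]
          norm_num
        rw [hhalf]
        have : (1 - (1:ENNReal)/2)⁻¹ = 2 := by
          norm_num
        rw [this, mul_two, show (6:ℝ) * C * K * Real.exp (-(c/2) * L ^ min p 1) =
          3 * C * K * Real.exp (-(c/2) * L ^ min p 1) +
          3 * C * K * Real.exp (-(c/2) * L ^ min p 1) by ring,
          ENNReal.ofReal_add (by positivity) (by positivity)]
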